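/- Let T = (t_{ijkl}) be a 4th-order 3-dimensional symmetric tensor with real entries satisfying t_{iiii} = 1 for all i, |t_{iiij}| = 1 and t_{iiij}·t_{ijjj} = -1 for all i ≠ j, |t_{1123}| = |t_{1223}| = |t_{1233}| = 1, and moreover t_{iijj} ≥ 8/3 for all i ≠ j. Then T is positive definite. -/

import Mathlib

lemma key_sorted (a b c : ℝ) (hc : 0 ≤ c) (hcb : c ≤ b) (hba : b ≤ a) (ha : 0 < a) :
    0 < a^4+b^4+c^4 - 4*(a*b*(a^2-b^2) + a*c*(a^2-c^2) + b*c*(b^2-c^2))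
      + 16*(a^2*b^2+a^2*c^2+b^2*c^2) - 12*(a^2*b*c+a*b^2*c+a*b*c^2) := by
  have hu : 0 ≤ a - b := by linarith
  have hv : 0 ≤ b - c := by linarith
  have hid : a^4+b^4+c^4 - 4*(a*b*(a^2-b^2) + a*c*(a^2-c^2) + b*c*(b^2-c^2))
      + 16*(a^2*b^2+a^2*c^2+b^2*c^2) - 12*(a^2*b*c+a*b^2*c+a*b*c^2)
      = ((a-b)^2 - 2*(a-b)*c - 2*(b-c)*c - c^2)^2
        + 14*c^4 + 20*(b-c)*c^3 + 28*(b-c)^2*c^2 + 40*(b-c)^3*c + 18*(b-c)^4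
        + 36*(a-b)*(b-c)^2*c + 28*(a-b)*(b-c)^3 + 10*(a-b)^2*(b-c)^2 := by ring
  rw [hid]
  rcases eq_or_lt_of_le hc with h0 | h0
  · subst h0
    rcases eq_or_lt_of_le hcb with h1 | h1
    · subst h1
      nlinarith [pow_pos ha 4]
    · have hbc : 0 < b - 0 := by linarith
      nlinarith [pow_pos hbc 4, sq_nonneg ((a-b)^2 - 2*(a-b)*0 - 2*(b-0)*0 - 0^2),
        mul_nonneg hu hv, mul_nonneg (mul_nonneg hu hv) hv,
        mul_nonneg (mul_nonneg (mul_nonneg hu hv) hv) hv,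
        mul_nonneg (mul_nonneg hu hu) (mul_nonneg hv hv)]
  · nlinarith [pow_pos h0 4, sq_nonneg ((a-b)^2 - 2*(a-b)*c - 2*(b-c)*c - c^2),
      mul_nonneg hv (le_of_lt h0), mul_nonneg (mul_nonneg hv hv) (le_of_lt h0),
      mul_nonneg (mul_nonneg (mul_nonneg hv hv) hv) (le_of_lt h0),
      mul_nonneg (mul_nonneg hu hv) (le_of_lt h0),
      mul_nonneg (mul_nonneg (mul_nonneg hu hv) hv) (le_of_lt h0),
      mul_nonneg (mul_nonneg hu hv) hv,
      mul_nonneg (mul_nonneg (mul_nonneg hu hv) hv) hv,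
      mul_nonneg (mul_nonneg hu hu) (mul_nonneg hv hv),
      pow_nonneg hv 4]

lemma key_abs_sorted (a b c : ℝ) (hc : 0 ≤ c) (hcb : c ≤ b) (hba : b ≤ a) (ha : 0 < a) :
    0 < a^4+b^4+c^4 - 4*(a*b*|a^2-b^2| + a*c*|a^2-c^2| + b*c*|b^2-c^2|)
      + 16*(a^2*b^2+a^2*c^2+b^2*c^2) - 12*(a^2*b*c+a*b^2*c+a*b*c^2) := by
  have h1 : |a^2-b^2| = a^2-b^2 := abs_of_nonneg (by nlinarith)
  have h2 : |a^2-c^2| = a^2-c^2 := abs_of_nonneg (by nlinarith)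
  have h3 : |b^2-c^2| = b^2-c^2 := abs_of_nonneg (by nlinarith)
  rw [h1, h2, h3]
  exact key_sorted a b c hc hcb hba ha

lemma key_abs (a b c : ℝ) (ha : 0 ≤ a) (hb : 0 ≤ b) (hc : 0 ≤ c)
    (hpos : 0 < a ∨ 0 < b ∨ 0 < c) :
    0 < a^4+b^4+c^4 - 4*(a*b*|a^2-b^2| + a*c*|a^2-c^2| + b*c*|b^2-c^2|)
      + 16*(a^2*b^2+a^2*c^2+b^2*c^2) - 12*(a^2*b*c+a*b^2*c+a*b*c^2) := by
  rcases le_total a b with hab | hab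
  · rcases le_total b c with hbc | hbc
    · -- a ≤ b ≤ c
      have hc0 : 0 < c := by rcases hpos with h|h|h <;> linarith
      have h := key_abs_sorted c b a ha hab hbc hc0
      rw [abs_sub_comm (c^2) (b^2), abs_sub_comm (c^2) (a^2), abs_sub_comm (b^2) (a^2)] at h
      linarith [h]
    · rcases le_total a c with hac | hac
      · -- a ≤ c ≤ b
        have hb0 : 0 < b := by rcases hpos with h|h|h <;> linarith
        have h := key_abs_sorted b c a ha hac hbc hb0
        rw [abs_sub_comm (b^2) (a^2), abs_sub_comm (c^2) (a^2)] at h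
        linarith [h]
      · -- c ≤ a ≤ b
        have hb0 : 0 < b := by rcases hpos with h|h|h <;> linarith
        have h := key_abs_sorted b a c hc hac hab hb0
        rw [abs_sub_comm (b^2) (a^2)] at h
        linarith [h]
  · rcases le_total a c with hac | hac
    · -- b ≤ a ≤ c
      have hc0 : 0 < c := by rcases hpos with h|h|h <;> linarith
      have h := key_abs_sorted c a b hb hab hac hc0
      rw [abs_sub_comm (c^2) (a^2), abs_sub_comm (c^2) (b^2)] at h
      linarith [h]
    · rcases le_total b c with hbc | hbc
      · -- b ≤ c ≤ a
        have ha0 : 0 < a := by rcases hpos with h|h|h <;> linarith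
        have h := key_abs_sorted a c b hb hbc hac ha0
        rw [abs_sub_comm (c^2) (b^2)] at h
        linarith [h]
      · -- c ≤ b ≤ a
        have ha0 : 0 < a := by rcases hpos with h|h|h <;> linarith
        exact key_abs_sorted a b c hc hbc hab ha0

lemma unit_mul_le (t y : ℝ) (h : |t| = 1) : -|y| ≤ t * y := by
  have h1 := neg_abs_le (t*y)
  rwa [abs_mul, h, one_mul] at h1

/-- A 4th-order 3-dimensional symmetric tensor `T = (t_ijkl)` is identified with the
quartic form
`Tx^4 = Σ_i t_iiii x_i^4 + 4 Σ_{i≠j} t_iiij x_i^3 x_j + 6 Σ_{i<j} t_iijj x_i^2 x_j^2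
  + 12 (t1123 x1^2 x2 x3 + t1223 x1 x2^2 x3 + t1233 x1 x2 x3^2)`.
Hypotheses: `t_iiii = 1`, `|t_iiij| = 1` and `t_iiij * t_ijjj = -1` for `i ≠ j`,
`|t1123| = |t1223| = |t1233| = 1`, and the stated condition on the `t_iijj`. -/
theorem stmt_7 (t1111 t2222 t3333 t1112 t1113 t1222 t2223 t1333 t2333
    t1122 t1133 t2233 t1123 t1223 t1233 : ℝ)
    (h1111 : t1111 = 1) (h2222 : t2222 = 1) (h3333 : t3333 = 1)
    (a1112 : |t1112| = 1) (a1113 : |t1113| = 1) (a1222 : |t1222| = 1)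
    (a2223 : |t2223| = 1) (a1333 : |t1333| = 1) (a2333 : |t2333| = 1)
    (p12 : t1112 * t1222 = -1) (p13 : t1113 * t1333 = -1) (p23 : t2223 * t2333 = -1)
    (a1123 : |t1123| = 1) (a1223 : |t1223| = 1) (a1233 : |t1233| = 1)
    (d12 : 8/3 ≤ t1122) (d13 : 8/3 ≤ t1133) (d23 : 8/3 ≤ t2233) :
    (∀ x1 x2 x3 : ℝ, (x1, x2, x3) ≠ (0, 0, 0) →
      0 < t1111 * x1^4 + t2222 * x2^4 + t3333 * x3^4
        + 4 * (t1112 * x1^3 * x2 + t1113 * x1^3 * x3 + t1222 * x1 * x2^3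
            + t2223 * x2^3 * x3 + t1333 * x1 * x3^3 + t2333 * x2 * x3^3)
        + 6 * (t1122 * x1^2 * x2^2 + t1133 * x1^2 * x3^2 + t2233 * x2^2 * x3^2)
        + 12 * (t1123 * x1^2 * x2 * x3 + t1223 * x1 * x2^2 * x3 + t1233 * x1 * x2 * x3^2)) := by
  -- the pairs of opposite-sign coefficients
  have sq1112 : t1112 * t1112 = 1 := by
    have := abs_mul_abs_self t1112
    rw [a1112] at this; linarith
  have sq1113 : t1113 * t1113 = 1 := by
    have := abs_mul_abs_self t1113
    rw [a1113] at this; linarith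
  have sq2223 : t2223 * t2223 = 1 := by
    have := abs_mul_abs_self t2223
    rw [a2223] at this; linarith
  have e12 : t1222 = -t1112 := by
    have h := congrArg (t1112 * ·) p12
    rw [← mul_assoc, sq1112, one_mul] at h
    linarith
  have e13 : t1333 = -t1113 := by
    have h := congrArg (t1113 * ·) p13
    rw [← mul_assoc, sq1113, one_mul] at h
    linarith
  have e23 : t2333 = -t2223 := by
    have h := congrArg (t2223 * ·) p23
    rw [← mul_assoc, sq2223, one_mul] at h
    linarith
  intro x1 x2 x3 hx
  have hne : x1 ≠ 0 ∨ x2 ≠ 0 ∨ x3 ≠ 0 := by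
    by_contra h
    push_neg at h
    exact hx (by simp [h.1, h.2.1, h.2.2])
  have hpos : 0 < |x1| ∨ 0 < |x2| ∨ 0 < |x3| := by
    rcases hne with h|h|h
    · exact Or.inl (abs_pos.mpr h)
    · exact Or.inr (Or.inl (abs_pos.mpr h))
    · exact Or.inr (Or.inr (abs_pos.mpr h))
  have hmain := key_abs |x1| |x2| |x3| (abs_nonneg _) (abs_nonneg _) (abs_nonneg _) hpos
  rw [sq_abs x1, sq_abs x2, sq_abs x3] at hmain
  -- cubic-term bounds
  have A12 := unit_mul_le t1112 (x1*x2*(x1^2-x2^2)) a1112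
  have A13 := unit_mul_le t1113 (x1*x3*(x1^2-x3^2)) a1113
  have A23 := unit_mul_le t2223 (x2*x3*(x2^2-x3^2)) a2223
  rw [abs_mul, abs_mul] at A12 A13 A23
  -- mixed-term bounds
  have B1 := unit_mul_le t1123 (x1^2*x2*x3) a1123
  have B2 := unit_mul_le t1223 (x1*x2^2*x3) a1223
  have B3 := unit_mul_le t1233 (x1*x2*x3^2) a1233
  rw [abs_mul, abs_mul, abs_of_nonneg (sq_nonneg x1)] at B1
  rw [abs_mul, abs_mul, abs_of_nonneg (sq_nonneg x2)] at B2
  rw [abs_mul, abs_mul, abs_of_nonneg (sq_nonneg x3)] at B3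
  -- diagonal quadratic bounds
  have D12 : 16*(x1^2*x2^2) ≤ 6*(t1122*(x1^2*x2^2)) := by
    have hX : (0:ℝ) ≤ x1^2*x2^2 := by positivity
    have h := mul_le_mul_of_nonneg_right d12 hX
    linarith
  have D13 : 16*(x1^2*x3^2) ≤ 6*(t1133*(x1^2*x3^2)) := by
    have hX : (0:ℝ) ≤ x1^2*x3^2 := by positivity
    have h := mul_le_mul_of_nonneg_right d13 hX
    linarith
  have D23 : 16*(x2^2*x3^2) ≤ 6*(t2233*(x2^2*x3^2)) := by
    have hX : (0:ℝ) ≤ x2^2*x3^2 := by positivity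
    have h := mul_le_mul_of_nonneg_right d23 hX
    linarith
  -- fourth powers of abs
  have P1 : |x1|^4 = x1^4 := by rw [← abs_pow]; exact abs_of_nonneg (by positivity)
  have P2 : |x2|^4 = x2^4 := by rw [← abs_pow]; exact abs_of_nonneg (by positivity)
  have P3 : |x3|^4 = x3^4 := by rw [← abs_pow]; exact abs_of_nonneg (by positivity)
  rw [h1111, h2222, h3333, e12, e13, e23]
  rw [P1, P2, P3] at hmain
  linarith [hmain, A12, A13, A23, B1, B2, B3, D12, D13, D23]
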